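/- Conservation of discrete mass for the modified semi-discrete discontinuous Galerkin scheme: if (C_0,…,C_{N_H−1}, E, Φ) solves the semi-discrete DG scheme with the DG Poisson solver, then t ↦ ∫_0^L C_0(t,x) dx is constant in t, i.e. d/dt ∫_0^L C_0(t,x) dx = 0. -/
import Mathlib


open MeasureTheory Finset

noncomputable section

/-- Left (minus) one-sided limit of the piecewise polynomial with cell
polynomials `u 0, …, u (Nx−1)` at the interface `x_{i+1/2} = X i`
(interfaces `i = 0` and `i = Nx` are identified periodically). -/
def dgMinus (Nx : ℕ) (X : ℕ → ℝ) (u : ℕ → Polynomial ℝ) (i : ℕ) : ℝ :=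
  if i = 0 then (u (Nx - 1)).eval (X Nx) else (u (i - 1)).eval (X i)

/-- Right (plus) one-sided limit at the interface `X i` (periodic). -/
def dgPlus (Nx : ℕ) (X : ℕ → ℝ) (u : ℕ → Polynomial ℝ) (i : ℕ) : ℝ :=
  if i = Nx then (u 0).eval (X 0) else (u i).eval (X i)

/-- Jump `[u] = u⁺ − u⁻` at the interface `X i`. -/
def dgJump (Nx : ℕ) (X : ℕ → ℝ) (u : ℕ → Polynomial ℝ) (i : ℕ) : ℝ :=
  dgPlus Nx X u i - dgMinus Nx X u i

/-- Average `{u} = (u⁺ + u⁻)/2` at the interface `X i`. -/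
def dgAvg (Nx : ℕ) (X : ℕ → ℝ) (u : ℕ → Polynomial ℝ) (i : ℕ) : ℝ :=
  (dgPlus Nx X u i + dgMinus Nx X u i) / 2

/-- Integral over the cell `I_j = (X j, X (j+1))`. -/
def cellInt (X : ℕ → ℝ) (j : ℕ) (f : ℝ → ℝ) : ℝ :=
  ∫ x in (X j)..(X (j + 1)), f x

/-- `g_n = v_th (√(n+1) C_{n+1} + √n C_{n−1})` on each cell (the convention
`C_{−1} = 0` is handled by `√0 = 0` and truncated subtraction). -/
def dgG (vth : ℝ) (Cf : ℕ → ℕ → Polynomial ℝ) (n j : ℕ) : Polynomial ℝ :=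
  vth • (Real.sqrt (n + 1) • Cf (n + 1) j + Real.sqrt n • Cf (n - 1) j)

/-- Global Lax–Friedrichs flux
`ĝ_n = (1/2)(g_n⁻ + g_n⁺ − α (C_n⁺ − C_n⁻))` with `α = v_th √N_H`. -/
def dgGhat (vth : ℝ) (NH Nx : ℕ) (X : ℕ → ℝ) (Cf : ℕ → ℕ → Polynomial ℝ)
    (n i : ℕ) : ℝ :=
  (1 / 2) * (dgMinus Nx X (dgG vth Cf n) i + dgPlus Nx X (dgG vth Cf n) i
    - vth * Real.sqrt NH *
        (dgPlus Nx X (Cf n) i - dgMinus Nx X (Cf n) i))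

/-- `Ĉ_1 = ĝ_0 / v_th`. -/
def dgC1hat (vth : ℝ) (NH Nx : ℕ) (X : ℕ → ℝ) (Cf : ℕ → ℕ → Polynomial ℝ)
    (i : ℕ) : ℝ :=
  dgGhat vth NH Nx X Cf 0 i / vth

/-- The convective DG form
`a_n^j(g_n, φ) = −∫_{I_j} g_n φ' + ĝ_{n,j+1/2} φ(x_{j+1/2}⁻) − ĝ_{n,j−1/2} φ(x_{j−1/2}⁺)`. -/
def dgA (vth : ℝ) (NH Nx : ℕ) (X : ℕ → ℝ) (Cf : ℕ → ℕ → Polynomial ℝ)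
    (n j : ℕ) (φ : Polynomial ℝ) : ℝ :=
  -(cellInt X j fun x => (dgG vth Cf n j).eval x * φ.derivative.eval x)
    + dgGhat vth NH Nx X Cf n (j + 1) * φ.eval (X (j + 1))
    - dgGhat vth NH Nx X Cf n j * φ.eval (X j)

/-- The residual `⟨r_1^j, φ⟩`. -/
def dgR1 (vth β : ℝ) (Nx : ℕ) (X : ℕ → ℝ) (Ef Φf : ℕ → Polynomial ℝ)
    (j : ℕ) (φ : Polynomial ℝ) : ℝ :=
  -(β / (2 * vth ^ 2)) *
    ((dgJump Nx X Φf j * dgJump Nx X Ef j) * φ.eval (X j)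
      + (dgJump Nx X Φf (j + 1) * dgJump Nx X Ef (j + 1)) * φ.eval (X (j + 1)))

/-- The residual `⟨r_2^j, φ⟩`. -/
def dgR2 (vth : ℝ) (NH Nx : ℕ) (X : ℕ → ℝ) (Cf : ℕ → ℕ → Polynomial ℝ)
    (Φf : ℕ → Polynomial ℝ) (j : ℕ) (φ : Polynomial ℝ) : ℝ :=
  (1 / (Real.sqrt 2 * vth)) *
    ((dgAvg Nx X (Cf 1) j - dgC1hat vth NH Nx X Cf j) * dgJump Nx X Φf j *
        φ.eval (X j)
      + (dgAvg Nx X (Cf 1) (j + 1) - dgC1hat vth NH Nx X Cf (j + 1)) *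
          dgJump Nx X Φf (j + 1) * φ.eval (X (j + 1)))

/-- The residual `⟨r_n^j, φ⟩` (zero for `n ∉ {1, 2}`). -/
def dgR (vth β : ℝ) (NH Nx : ℕ) (X : ℕ → ℝ) (Cf : ℕ → ℕ → Polynomial ℝ)
    (Ef Φf : ℕ → Polynomial ℝ) (n j : ℕ) (φ : Polynomial ℝ) : ℝ :=
  if n = 1 then dgR1 vth β Nx X Ef Φf j φ
  else if n = 2 then dgR2 vth NH Nx X Cf Φf j φ
  else 0

/-- The source form `b_n^j(C, E, Φ, φ) = −(√n/v_th) ∫_{I_j} E C_{n−1} φ − ⟨r_n^j, φ⟩`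
(for `n = 0` this is `0` since `√0 = 0` and `r_0 = 0`). -/
def dgB (vth β : ℝ) (NH Nx : ℕ) (X : ℕ → ℝ) (Cf : ℕ → ℕ → Polynomial ℝ)
    (Ef Φf : ℕ → Polynomial ℝ) (n j : ℕ) (φ : Polynomial ℝ) : ℝ :=
  -(Real.sqrt n / vth) *
      (cellInt X j fun x => (Ef j).eval x * (Cf (n - 1) j).eval x * φ.eval x)
    - dgR vth β NH Nx X Cf Ef Φf n j φ

/-- The local DG scheme for the Poisson equation with source `C_0`, with
fluxes `Φ̂ = {Φ}` and `Ê = {E} − β [Φ]`. -/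
def dgPoisson (vth ρ0 β : ℝ) (k Nx : ℕ) (X : ℕ → ℝ)
    (C0f Ef Φf : ℕ → Polynomial ℝ) : Prop :=
  ∀ j < Nx, ∀ ψ : Polynomial ℝ, ψ.natDegree ≤ k →
    ((cellInt X j fun x => (Φf j).eval x * ψ.derivative.eval x)
        - dgAvg Nx X Φf (j + 1) * ψ.eval (X (j + 1))
        + dgAvg Nx X Φf j * ψ.eval (X j)
      = cellInt X j fun x => (Ef j).eval x * ψ.eval x)
    ∧ (-(cellInt X j fun x => (Ef j).eval x * ψ.derivative.eval x)
        + (dgAvg Nx X Ef (j + 1) - β * dgJump Nx X Φf (j + 1)) *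
            ψ.eval (X (j + 1))
        - (dgAvg Nx X Ef j - β * dgJump Nx X Φf j) * ψ.eval (X j)
      = cellInt X j fun x => (vth * (C0f j).eval x - ρ0) * ψ.eval x)

/-- `∫_0^L u dx` for a piecewise polynomial `u`. -/
def dgTotInt (Nx : ℕ) (X : ℕ → ℝ) (u : ℕ → Polynomial ℝ) : ℝ :=
  ∑ j ∈ Finset.range Nx, cellInt X j fun x => (u j).eval x

/-- The discrete total energy
`ℰ_h = (1/2) ∫_0^L [v_th³(√2 C_2 + C_0) + E²] dx + (β/2) Σ_j [Φ]_{j−1/2}²`. -/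
def dgEnergy (vth β : ℝ) (Nx : ℕ) (X : ℕ → ℝ) (Cf : ℕ → ℕ → Polynomial ℝ)
    (Ef Φf : ℕ → Polynomial ℝ) : ℝ :=
  (1 / 2) * ∑ j ∈ Finset.range Nx,
      (cellInt X j fun x =>
        vth ^ 3 * (Real.sqrt 2 * (Cf 2 j).eval x + (Cf 0 j).eval x)
          + ((Ef j).eval x) ^ 2)
    + (β / 2) * ∑ j ∈ Finset.range Nx, (dgJump Nx X Φf j) ^ 2

end

/-- Conservation of the discrete mass for the modified semi-discrete
discontinuous Galerkin scheme: `t ↦ ∫_0^L C_0(t,x) dx` is constant. -/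
theorem dg_semidiscrete_mass_conservation
    (L vth ρ0 β : ℝ) (k Nx NH : ℕ)
    (hL : 0 < L) (hvth : 0 < vth) (hβ : 0 < β) (hNx : 1 ≤ Nx) (hNH : 3 ≤ NH)
    -- the partition `0 = x_{1/2} < … < x_{Nx+1/2} = L`
    (X : ℕ → ℝ) (hX0 : X 0 = 0) (hXL : X Nx = L)
    (hXmono : ∀ j < Nx, X j < X (j + 1))
    -- the numerical solution, cell by cell
    (C : ℕ → ℝ → ℕ → Polynomial ℝ) (E Φ : ℝ → ℕ → Polynomial ℝ)
    -- membership in `V_h^k`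
    (hdegC : ∀ n t j, (C n t j).natDegree ≤ k)
    (hdegE : ∀ t j, (E t j).natDegree ≤ k)
    (hdegΦ : ∀ t j, (Φ t j).natDegree ≤ k)
    -- truncation convention `C_{N_H} = 0` (and beyond)
    (hCtop : ∀ n, NH ≤ n → ∀ t j, C n t j = 0)
    -- C¹ regularity in time
    (hC1 : ∀ n j (φ : Polynomial ℝ),
      Differentiable ℝ fun t => cellInt X j fun x => (C n t j).eval x * φ.eval x)
    -- the modified semi-discrete DG scheme
    (hScheme : ∀ t : ℝ, ∀ n < NH, ∀ j < Nx, ∀ φ : Polynomial ℝ, φ.natDegree ≤ k →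
      deriv (fun s => cellInt X j fun x => (C n s j).eval x * φ.eval x) t
        + dgA vth NH Nx X (fun m i => C m t i) n j φ
        + dgB vth β NH Nx X (fun m i => C m t i) (E t) (Φ t) n j φ = 0)
    -- the DG Poisson solver
    (hPoisson : ∀ t : ℝ, dgPoisson vth ρ0 β k Nx X (C 0 t) (E t) (Φ t)) :
    ∀ t : ℝ, dgTotInt Nx X (C 0 t) = dgTotInt Nx X (C 0 0) := by
    -- periodicity of the flux
  have hNx0 : Nx ≠ 0 := by omega
  have hper : ∀ t : ℝ, dgGhat vth NH Nx X (fun m i => C m t i) 0 Nx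
      = dgGhat vth NH Nx X (fun m i => C m t i) 0 0 := by
    intro t
    simp [dgGhat, dgMinus, dgPlus, hNx0]
  set F : ℝ → ℝ := fun t => dgTotInt Nx X (C 0 t) with hF
  have hFeq : ∀ t, F t = ∑ j ∈ Finset.range Nx,
      (cellInt X j fun x => (C 0 t j).eval x * (1 : Polynomial ℝ).eval x) := by
    intro t
    simp [hF, dgTotInt]
  have hdiff : ∀ j, Differentiable ℝ fun t =>
      cellInt X j fun x => (C 0 t j).eval x * (1 : Polynomial ℝ).eval x :=
    fun j => hC1 0 j 1
  have hFdiff : Differentiable ℝ F := by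
    have hFe : F = fun t => ∑ j ∈ Finset.range Nx,
        (cellInt X j fun x => (C 0 t j).eval x * (1 : Polynomial ℝ).eval x) :=
      funext hFeq
    rw [hFe]
    exact Differentiable.fun_sum fun j _ => hdiff j
  have hderiv : ∀ t, deriv F t = 0 := by
    intro t
    have hsum : deriv F t = ∑ j ∈ Finset.range Nx,
        deriv (fun s => cellInt X j fun x =>
          (C 0 s j).eval x * (1 : Polynomial ℝ).eval x) t := by
      have := deriv_fun_sum (x := t) (u := Finset.range Nx)
        (A := fun j s => cellInt X j fun x =>
          (C 0 s j).eval x * (1 : Polynomial ℝ).eval x)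
        (fun j _ => (hdiff j).differentiableAt)
      calc deriv F t = deriv (fun s => ∑ j ∈ Finset.range Nx,
            (cellInt X j fun x => (C 0 s j).eval x * (1 : Polynomial ℝ).eval x)) t := by
              congr 1; funext s; exact hFeq s
        _ = _ := this
    rw [hsum]
    have hterm : ∀ j < Nx,
        deriv (fun s => cellInt X j fun x =>
          (C 0 s j).eval x * (1 : Polynomial ℝ).eval x) t
        = -(dgGhat vth NH Nx X (fun m i => C m t i) 0 (j + 1)
            - dgGhat vth NH Nx X (fun m i => C m t i) 0 j) := by
      intro j hj
      have h := hScheme t 0 (by omega) j hj 1 (by simp)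
      have hA : dgA vth NH Nx X (fun m i => C m t i) 0 j 1
          = dgGhat vth NH Nx X (fun m i => C m t i) 0 (j + 1)
            - dgGhat vth NH Nx X (fun m i => C m t i) 0 j := by
        simp [dgA, cellInt]
      have hB : dgB vth β NH Nx X (fun m i => C m t i) (E t) (Φ t) 0 j 1 = 0 := by
        simp [dgB, dgR]
      rw [hA, hB] at h
      linarith
    rw [Finset.sum_congr rfl (fun j hj => hterm j (Finset.mem_range.mp hj))]
    simp only [neg_sub]
    rw [Finset.sum_range_sub' (f := fun i =>
      dgGhat vth NH Nx X (fun m i => C m t i) 0 i)]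
    rw [hper t]
    ring
  intro t
  exact is_const_of_deriv_eq_zero hFdiff hderiv t 0
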